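/- Shamir secret sharing privacy: for a secret s in a field F of size q, any t−1 evaluation shares (f(x_1),…,f(x_{t−1})) at fixed distinct nonzero points, taken over a uniformly random polynomial f of degree < t with f(0) = s, are uniformly distributed on F^{t−1}; in particular their distribution is independent of s. -/
import Mathlib


/-- Shamir secret sharing privacy: for fixed distinct nonzero points `x₁,…,x_{t−1}`, the
share map `f ↦ (f(x₁),…,f(x_{t−1}))` is a bijection from the set of degree `< t`
polynomials with `f(0) = s` to `F^{t−1}`, for every secret `s`. -/
theorem shamir_privacy {F : Type*} [Field F] [Fintype F] (t : ℕ) (ht : 1 ≤ t)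
    (x : Fin (t - 1) → F) (hinj : Function.Injective x) (hx0 : ∀ i, x i ≠ 0)
    (s : F) :
    Function.Bijective
      (fun f : {f : Polynomial F // f.degree < t ∧ f.eval 0 = s} =>
        fun i : Fin (t - 1) => (f : Polynomial F).eval (x i)) := by
  classical
  set v : Option (Fin (t - 1)) → F := fun o => o.elim 0 x with hv
  have hvinj : Function.Injective v := by
    rintro (_ | i) (_ | j) h
    · rfl
    · exact absurd h.symm (hx0 j)
    · exact absurd h (hx0 i)
    · exact congrArg _ (hinj h)
  have hvs : Set.InjOn v (Finset.univ : Finset (Option (Fin (t - 1)))) :=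
    hvinj.injOn
  have hcard : (Finset.univ : Finset (Option (Fin (t - 1)))).card = t := by
    simp only [Finset.card_univ, Fintype.card_option, Fintype.card_fin]
    omega
  rw [Function.bijective_iff_has_inverse]
  refine ⟨fun y => ⟨Lagrange.interpolate Finset.univ v (fun o => o.elim s y), ?_, ?_⟩,
    ?_, ?_⟩
  · simpa [hcard] using Lagrange.degree_interpolate_lt (s := Finset.univ)
      (fun o => o.elim s y) hvs
  · have := Lagrange.eval_interpolate_at_node (s := Finset.univ) (v := v)
      (fun o => o.elim s y) hvs (Finset.mem_univ none)
    simpa [hv] using this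
  · rintro ⟨f, hdeg, heval⟩
    ext1
    simp only
    have hd : f.degree < (Finset.univ : Finset (Option (Fin (t - 1)))).card := by
      rw [hcard]; exact hdeg
    have hfun : (fun o : Option (Fin (t - 1)) =>
        Option.elim o s (fun i => Polynomial.eval (x i) f)) =
        fun o => Polynomial.eval (v o) f := by
      funext o
      cases o with
      | none => simpa [hv] using heval.symm
      | some i => rfl
    rw [hfun]
    exact (Lagrange.eq_interpolate hvs hd).symm
  · intro y
    funext i
    have := Lagrange.eval_interpolate_at_node (s := Finset.univ) (v := v)
      (fun o => o.elim s y) hvs (Finset.mem_univ (some i))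
    simpa [hv] using this
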